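/- arXiv:1510.03419 — 7 statements merged into one kernel-verified Lean document; each statement's English description precedes it below -/
import Mathlib

section
/- Let K be a finite abelian group and consider a Mermin measurement scenario with data (K, a, M, n, N, n₀, R) as in the context. Then there exists a probabilistic non-contextual (local) hidden variable model for the scenario — i.e. a function p : (ZMod N × Fin (M+1) → K) → ℝ with p s ≥ 0 for all s, ∑_{s} p s = 1 (sum over all global assignments s), such that (a) for every w : ZMod N → K, ∑ over those s with s (i, 0) = w i for all i of p s equals (Fintype.card K : ℝ)^(N−1))⁻¹ if ∑_i w i = 0 and equals 0 otherwise, and (b) for every v : ZMod N and every w : ZMod N → K, ∑ over those s with s (i, R (i + v)) = w i for all i of p s equals ((Fintype.card K : ℝ)^(N−1))⁻¹ if ∑_i w i = a and equals 0 otherwise — if and only if there exists y : Fin M → K with ∑_{r : Fin M} (n r) • y r = a. -/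
section Aux

variable {K : Type} [AddCommGroup K] [Fintype K] [DecidableEq K]

/-- Fibers of the sum map all have the same cardinality. -/
lemma mermin_card_sum_fiber (N : ℕ) [NeZero N] (k : K) :
    (Finset.univ.filter fun w : ZMod N → K => ∑ i, w i = k).card
      = (Finset.univ.filter fun w : ZMod N → K => ∑ i, w i = 0).card := by
  refine Finset.card_bij' (fun w _ => Function.update w 0 (w 0 - k))
    (fun w _ => Function.update w 0 (w 0 + k)) ?hi ?hj ?li ?ri
  case hi =>
    intro w hw
    simp only [Finset.mem_filter, Finset.mem_univ, true_and] at hw ⊢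
    rw [Finset.sum_update_of_mem (Finset.mem_univ _)]
    have h2 : ∑ x, w x = ∑ x ∈ Finset.univ \ {(0 : ZMod N)}, w x + w 0 :=
      Finset.sum_eq_sum_sdiff_singleton_add (Finset.mem_univ _) w
    have h3 : ∑ x ∈ Finset.univ \ {(0 : ZMod N)}, w x = k - w 0 := by
      rw [hw] at h2; exact eq_sub_of_add_eq h2.symm
    rw [h3]; abel
  case hj =>
    intro w hw
    simp only [Finset.mem_filter, Finset.mem_univ, true_and] at hw ⊢
    rw [Finset.sum_update_of_mem (Finset.mem_univ _)]
    have h2 : ∑ x, w x = ∑ x ∈ Finset.univ \ {(0 : ZMod N)}, w x + w 0 :=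
      Finset.sum_eq_sum_sdiff_singleton_add (Finset.mem_univ _) w
    have h3 : ∑ x ∈ Finset.univ \ {(0 : ZMod N)}, w x = 0 - w 0 := by
      rw [hw] at h2; exact eq_sub_of_add_eq h2.symm
    rw [h3]; abel
  case li =>
    intro w _
    simp only [Function.update_idem, Function.update_self]
    rw [sub_add_cancel, Function.update_eq_self]
  case ri =>
    intro w _
    simp only [Function.update_idem, Function.update_self]
    rw [add_sub_cancel_right, Function.update_eq_self]

/-- The number of `N`-tuples with sum zero is `|K| ^ (N - 1)`. -/
lemma mermin_card_sum_zero (N : ℕ) [NeZero N] :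
    (Finset.univ.filter fun w : ZMod N → K => ∑ i, w i = 0).card
      = Fintype.card K ^ (N - 1) := by
  have hK : 0 < Fintype.card K := Fintype.card_pos
  have h : Fintype.card K * (Finset.univ.filter fun w : ZMod N → K => ∑ i, w i = 0).card
      = Fintype.card K ^ N := by
    have hfib := Finset.card_eq_sum_card_fiberwise
      (f := fun w : ZMod N → K => ∑ i, w i) (s := Finset.univ) (t := Finset.univ)
      (fun _ _ => Finset.mem_univ _)
    rw [Finset.card_univ, Fintype.card_fun, ZMod.card] at hfib
    rw [hfib]
    simp only [mermin_card_sum_fiber, Finset.sum_const, Finset.card_univ, smul_eq_mul]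
  have hNpow : Fintype.card K ^ N = Fintype.card K * Fintype.card K ^ (N - 1) := by
    obtain ⟨m, rfl⟩ : ∃ m, N = m + 1 := ⟨N - 1, (Nat.succ_pred_eq_of_pos (NeZero.pos N)).symm⟩
    rw [Nat.add_sub_cancel, pow_succ, mul_comm]
  exact Nat.eq_of_mul_eq_mul_left hK (by rw [h, hNpow])

/-- The marginal of the canonical deterministic-mixture distribution over any context. -/
lemma mermin_marginal {M N : ℕ} [NeZero N] (δ : Fin (M + 1) → K) (hδ0 : δ 0 = 0)
    (c : ZMod N → Fin (M + 1)) (w : ZMod N → K) (cst : ℝ) :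
    (∑ s ∈ Finset.univ.filter
        (fun s : (ZMod N × Fin (M + 1)) → K => ∀ i : ZMod N, s (i, c i) = w i),
      if (∑ i : ZMod N, s (i, 0)) = 0 ∧ (∀ i r, s (i, r) = s (i, 0) + δ r) then cst else 0)
      = if (∑ i : ZMod N, w i) = (∑ i : ZMod N, δ (c i)) then cst else 0 := by
  by_cases h : (∑ i : ZMod N, w i) = (∑ i : ZMod N, δ (c i))
  · rw [if_pos h]
    have hmem : (fun q : ZMod N × Fin (M + 1) => w q.1 - δ (c q.1) + δ q.2)
        ∈ Finset.univ.filter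
          (fun s : (ZMod N × Fin (M + 1)) → K => ∀ i : ZMod N, s (i, c i) = w i) := by
      simp only [Finset.mem_filter, Finset.mem_univ, true_and]
      intro i; simp
    have hother : ∀ s ∈ Finset.univ.filter
        (fun s : (ZMod N × Fin (M + 1)) → K => ∀ i : ZMod N, s (i, c i) = w i),
        s ≠ (fun q : ZMod N × Fin (M + 1) => w q.1 - δ (c q.1) + δ q.2) →
        (if (∑ i : ZMod N, s (i, 0)) = 0 ∧ (∀ i r, s (i, r) = s (i, 0) + δ r)
          then cst else 0) = 0 := by
      intro s hs hne
      rw [if_neg]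
      rintro ⟨h1, h2⟩
      apply hne
      simp only [Finset.mem_filter, Finset.mem_univ, true_and] at hs
      funext q
      obtain ⟨i, r⟩ := q
      have e0 : s (i, 0) = w i - δ (c i) := by
        have h3 := h2 i (c i)
        rw [hs i] at h3
        rw [eq_sub_iff_add_eq]
        exact h3.symm
      rw [h2 i r, e0]
    rw [Finset.sum_eq_single_of_mem _ hmem hother]
    rw [if_pos]
    refine ⟨?_, ?_⟩
    · simp only [hδ0, add_zero, Finset.sum_sub_distrib]
      rw [sub_eq_zero]; exact h
    · intro i r; simp [hδ0]
  · rw [if_neg h]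
    apply Finset.sum_eq_zero
    intro s hs
    rw [if_neg]
    rintro ⟨h1, h2⟩
    simp only [Finset.mem_filter, Finset.mem_univ, true_and] at hs
    apply h
    have hw : ∀ i : ZMod N, w i = s (i, 0) + δ (c i) := by
      intro i; rw [← hs i, h2 i (c i)]
    calc ∑ i : ZMod N, w i = ∑ i : ZMod N, (s (i, 0) + δ (c i)) :=
          Finset.sum_congr rfl fun i _ => hw i
      _ = (∑ i : ZMod N, s (i, 0)) + ∑ i : ZMod N, δ (c i) := Finset.sum_add_distrib
      _ = ∑ i : ZMod N, δ (c i) := by rw [h1, zero_add]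

end Aux

/-- The Mermin measurement scenario with data `(K, a, M, n, N, n₀, R)` admits a
probabilistic non-contextual (local) hidden variable model if and only if the equation
`⊕_r n_r • y_r = a` has a solution in `K`. -/
theorem mermin_probabilistic_lhv_iff_solution
    {K : Type} [AddCommGroup K] [Fintype K] [DecidableEq K]
    (a : K) (M : ℕ) (hM : 1 ≤ M) (n : Fin M → ℕ) (hn : ∀ r, 1 ≤ n r)
    (N : ℕ) [NeZero N] (hN : 1 ≤ N) (hsum : ∑ r, n r ≤ N)
    (hexp : ∀ x : K, N • x = x)
    (R : ZMod N → Fin (M + 1))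
    (hR0 : (Finset.univ.filter fun i : ZMod N => R i = 0).card = N - ∑ r, n r)
    (hRr : ∀ r : Fin M, (Finset.univ.filter fun i : ZMod N => R i = r.succ).card = n r) :
    (∃ p : ((ZMod N × Fin (M + 1)) → K) → ℝ,
      (∀ s, 0 ≤ p s) ∧
      (∑ s : (ZMod N × Fin (M + 1)) → K, p s = 1) ∧
      (∀ w : ZMod N → K,
        ∑ s ∈ Finset.univ.filter
            (fun s : (ZMod N × Fin (M + 1)) → K => ∀ i : ZMod N, s (i, 0) = w i), p s
          = if ∑ i : ZMod N, w i = 0 then ((Fintype.card K : ℝ) ^ (N - 1))⁻¹ else 0) ∧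
      (∀ v : ZMod N, ∀ w : ZMod N → K,
        ∑ s ∈ Finset.univ.filter
            (fun s : (ZMod N × Fin (M + 1)) → K => ∀ i : ZMod N, s (i, R (i + v)) = w i), p s
          = if ∑ i : ZMod N, w i = a then ((Fintype.card K : ℝ) ^ (N - 1))⁻¹ else 0))
    ↔ ∃ y : Fin M → K, ∑ r, n r • y r = a := by
  constructor
  · rintro ⟨p, hpos, htot, hctrl, hvar⟩
    obtain ⟨s, -, hsne⟩ := Finset.exists_ne_zero_of_sum_ne_zero
      (by rw [htot]; exact one_ne_zero)
    have hsp : 0 < p s := (hpos s).lt_of_ne (Ne.symm hsne)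
    have h0 : ∑ i : ZMod N, s (i, (0 : Fin (M + 1))) = 0 := by
      by_contra hc
      have hm := hctrl (fun i => s (i, 0))
      rw [if_neg hc] at hm
      have hmem : s ∈ Finset.univ.filter
          (fun s' : (ZMod N × Fin (M + 1)) → K => ∀ i : ZMod N, s' (i, 0) = s (i, 0)) := by
        simp
      have hle := Finset.single_le_sum (f := p) (fun x _ => hpos x) hmem
      rw [hm] at hle
      linarith
    have hva : ∀ v : ZMod N, ∑ i : ZMod N, s (i, R (i + v)) = a := by
      intro v
      by_contra hc
      have hm := hvar v (fun i => s (i, R (i + v)))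
      rw [if_neg hc] at hm
      have hmem : s ∈ Finset.univ.filter
          (fun s' : (ZMod N × Fin (M + 1)) → K =>
            ∀ i : ZMod N, s' (i, R (i + v)) = s (i, R (i + v))) := by
        simp
      have hle := Finset.single_le_sum (f := p) (fun x _ => hpos x) hmem
      rw [hm] at hle
      linarith
    refine ⟨fun r => ∑ i : ZMod N, s (i, r.succ), ?_⟩
    calc ∑ r : Fin M, n r • (∑ i : ZMod N, s (i, r.succ))
        = (N - ∑ r, n r) • (∑ i : ZMod N, s (i, (0 : Fin (M + 1))))
            + ∑ r : Fin M, n r • (∑ i : ZMod N, s (i, r.succ)) := by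
          rw [h0, smul_zero, zero_add]
      _ = ∑ t : Fin (M + 1),
            (Finset.univ.filter fun j : ZMod N => R j = t).card • (∑ i : ZMod N, s (i, t)) := by
          rw [Fin.sum_univ_succ, hR0]
          congr 1
          exact (Finset.sum_congr rfl fun r _ => by rw [hRr r]).symm
      _ = ∑ t : Fin (M + 1), ∑ j ∈ Finset.univ.filter (fun j : ZMod N => R j = t),
            (∑ i : ZMod N, s (i, t)) := by
          simp [Finset.sum_const]
      _ = ∑ j : ZMod N, (∑ i : ZMod N, s (i, R j)) := Finset.sum_fiberwise' _ _ _
      _ = ∑ i : ZMod N, ∑ j : ZMod N, s (i, R j) := Finset.sum_comm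
      _ = ∑ i : ZMod N, ∑ v : ZMod N, s (i, R (i + v)) := by
          refine Finset.sum_congr rfl fun i _ => ?_
          exact (Equiv.sum_comp (Equiv.addLeft i) (fun j => s (i, R j))).symm
      _ = ∑ v : ZMod N, ∑ i : ZMod N, s (i, R (i + v)) := Finset.sum_comm
      _ = ∑ _v : ZMod N, a := Finset.sum_congr rfl fun v _ => hva v
      _ = a := by
          rw [Finset.sum_const, Finset.card_univ, ZMod.card, hexp]
  · rintro ⟨y, hy⟩
    set cst : ℝ := ((Fintype.card K : ℝ) ^ (N - 1))⁻¹ with hcst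
    set δ : Fin (M + 1) → K := Fin.cases 0 y with hδ
    have hδ0 : δ 0 = 0 := rfl
    have hδs : ∀ r : Fin M, δ r.succ = y r := fun r => by simp [hδ]
    have hcstpos : (0 : ℝ) ≤ cst := by
      rw [hcst]; positivity
    refine ⟨fun s => if (∑ i : ZMod N, s (i, 0)) = 0 ∧ (∀ i r, s (i, r) = s (i, 0) + δ r)
        then cst else 0, fun s => ?_, ?_, ?_, ?_⟩
    · dsimp only
      split_ifs
      · exact hcstpos
      · exact le_refl 0
    · -- total probability 1
      rw [← Finset.sum_fiberwise Finset.univ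
        (fun s : (ZMod N × Fin (M + 1)) → K => fun i : ZMod N => s (i, 0))
        (fun s => if (∑ i : ZMod N, s (i, 0)) = 0 ∧ (∀ i r, s (i, r) = s (i, 0) + δ r)
          then cst else 0)]
      have inner : ∀ w : ZMod N → K,
          (∑ s ∈ Finset.univ.filter
              (fun s : (ZMod N × Fin (M + 1)) → K =>
                (fun i : ZMod N => s (i, 0)) = w),
            if (∑ i : ZMod N, s (i, 0)) = 0 ∧ (∀ i r, s (i, r) = s (i, 0) + δ r)
              then cst else 0)
          = if (∑ i : ZMod N, w i) = 0 then cst else 0 := by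
        intro w
        have hfilter : (Finset.univ.filter
            (fun s : (ZMod N × Fin (M + 1)) → K => (fun i : ZMod N => s (i, 0)) = w))
            = Finset.univ.filter
              (fun s : (ZMod N × Fin (M + 1)) → K => ∀ i : ZMod N, s (i, 0) = w i) := by
          apply Finset.filter_congr
          intro s _
          simp [funext_iff]
        rw [hfilter]
        have := mermin_marginal δ hδ0 (fun _ => (0 : Fin (M + 1))) w cst
        simpa [hδ0] using this
      simp_rw [inner]
      rw [Finset.sum_ite, Finset.sum_const, Finset.sum_const_zero, add_zero,
        mermin_card_sum_zero, nsmul_eq_mul, hcst]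
      rw [Nat.cast_pow]
      apply mul_inv_cancel₀
      have : (0 : ℝ) < (Fintype.card K : ℝ) ^ (N - 1) := by positivity
      exact ne_of_gt this
    · -- control marginal
      intro w
      have := mermin_marginal δ hδ0 (fun _ => (0 : Fin (M + 1))) w cst
      simpa [hδ0] using this
    · -- variation marginals
      intro v w
      have hsum_v : ∑ i : ZMod N, δ (R (i + v)) = a := by
        have e : ∑ i : ZMod N, δ (R (i + v)) = ∑ j : ZMod N, δ (R j) :=
          Equiv.sum_comp (Equiv.addRight v) (fun j => δ (R j))
        rw [e]
        calc ∑ j : ZMod N, δ (R j)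
            = ∑ t : Fin (M + 1), ∑ j ∈ Finset.univ.filter (fun j : ZMod N => R j = t), δ t :=
              (Finset.sum_fiberwise' _ _ _).symm
          _ = ∑ t : Fin (M + 1),
                (Finset.univ.filter fun j : ZMod N => R j = t).card • δ t := by
              simp [Finset.sum_const]
          _ = a := by
              rw [Fin.sum_univ_succ, hR0, hδ0, smul_zero, zero_add]
              rw [← hy]
              exact Finset.sum_congr rfl fun r _ => by rw [hRr r, hδs r]
      have := mermin_marginal δ hδ0 (fun i => R (i + v)) w cst
      simpa [hsum_v] using this
end

section
/- Let K be a finite abelian group and consider a Mermin measurement scenario with data (K, a, M, n, N, n₀, R) as in the context. Then there exists a global assignment s : ZMod N × Fin (M+1) → K whose restriction to every context lies in the support of that context — i.e. with ∑_{i : ZMod N} s (i, 0) = 0 and, for every v : ZMod N, ∑_{i : ZMod N} s (i, R (i + v)) = a — if and only if there exists y : Fin M → K with ∑_{r : Fin M} (n r) • y r = a. (Equivalently: the Mermin empirical model is strongly contextual iff the equation ⊕_r n_r y_r = a has no solution in K.) -/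
/-- The Mermin empirical model admits a global assignment whose restriction to
every context lies in the support of that context if and only if the equation
`⊕_r n_r • y_r = a` has a solution in `K` (equivalently, the model is strongly contextual iff
the equation has no solution in `K`). -/
theorem mermin_global_assignment_iff_solution
    {K : Type} [AddCommGroup K] [Fintype K]
    (a : K) (M : ℕ) (hM : 1 ≤ M) (n : Fin M → ℕ) (hn : ∀ r, 1 ≤ n r)
    (N : ℕ) [NeZero N] (hN : 1 ≤ N) (hsum : ∑ r, n r ≤ N)
    (hexp : ∀ x : K, N • x = x)
    (R : ZMod N → Fin (M + 1))
    (hR0 : (Finset.univ.filter fun i : ZMod N => R i = 0).card = N - ∑ r, n r)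
    (hRr : ∀ r : Fin M, (Finset.univ.filter fun i : ZMod N => R i = r.succ).card = n r) :
    (∃ s : ZMod N × Fin (M + 1) → K,
      (∑ i : ZMod N, s (i, 0) = 0) ∧
      (∀ v : ZMod N, ∑ i : ZMod N, s (i, R (i + v)) = a))
    ↔ ∃ y : Fin M → K, ∑ r, n r • y r = a := by
  have hfib : ∀ g : Fin (M + 1) → K, ∑ j : ZMod N, g (R j)
      = (N - ∑ r, n r) • g 0 + ∑ r : Fin M, n r • g r.succ := by
    intro g
    have h1 : ∑ j : ZMod N, g (R j)
        = ∑ t : Fin (M + 1), ∑ j ∈ Finset.univ.filter (fun j => R j = t), g (R j) :=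
      (Finset.sum_fiberwise Finset.univ R (fun j => g (R j))).symm
    have h2 : ∀ t : Fin (M + 1),
        ∑ j ∈ Finset.univ.filter (fun j => R j = t), g (R j)
        = (Finset.univ.filter (fun j : ZMod N => R j = t)).card • g t := by
      intro t
      rw [Finset.sum_congr rfl (fun j hj => by
        rw [(Finset.mem_filter.mp hj).2]), Finset.sum_const]
    rw [h1, Finset.sum_congr rfl (fun t _ => h2 t), Fin.sum_univ_succ, hR0]
    congr 1
    exact Finset.sum_congr rfl fun r _ => by rw [hRr r]
  constructor
  · rintro ⟨s, hc, hv⟩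
    refine ⟨fun r => ∑ i : ZMod N, s (i, r.succ), ?_⟩
    have key : ∑ v : ZMod N, ∑ i : ZMod N, s (i, R (i + v)) = a := by
      rw [Finset.sum_congr rfl (fun v _ => hv v), Finset.sum_const,
        Finset.card_univ, ZMod.card, hexp]
    rw [Finset.sum_comm] at key
    have hin : ∀ i : ZMod N, ∑ v : ZMod N, s (i, R (i + v))
        = (N - ∑ r, n r) • s (i, 0) + ∑ r : Fin M, n r • s (i, r.succ) := by
      intro i
      rw [show (∑ v : ZMod N, s (i, R (i + v))) = ∑ j : ZMod N, s (i, R j) from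
        Equiv.sum_comp (Equiv.addLeft i) (fun j => s (i, R j))]
      exact hfib (fun t => s (i, t))
    rw [Finset.sum_congr rfl (fun i _ => hin i), Finset.sum_add_distrib,
      ← Finset.smul_sum, hc, smul_zero, zero_add, Finset.sum_comm] at key
    rw [← key]
    exact Finset.sum_congr rfl fun r _ => by simp [Finset.smul_sum]
  · rintro ⟨y, hy⟩
    refine ⟨fun p => Fin.cases 0 y p.2, by simp, fun v => ?_⟩
    rw [show (∑ i : ZMod N, Fin.cases (motive := fun _ => K) 0 y (R (i + v)))
        = ∑ j : ZMod N, Fin.cases (motive := fun _ => K) 0 y (R j) from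
      Equiv.sum_comp (Equiv.addRight v) (fun j => Fin.cases (motive := fun _ => K) 0 y (R j)),
      hfib (Fin.cases 0 y)]
    simp [hy]
end

section
/- Let K be a finite abelian group and consider a Mermin measurement scenario with data (K, a, M, n, N, n₀, R) as in the context. The associated empirical model is All-vs-Nothing with respect to ℤ and K (AvN_{ℤ,K}) — i.e. there is NO global assignment s : ZMod N × Fin (M+1) → K such that (a) for every m : ZMod N → ℤ and b ∈ K with the property that every w : ZMod N → K with ∑_i w i = 0 satisfies ∑_i (m i) • w i = b, one has ∑_i (m i) • s (i, 0) = b, and (b) for every v : ZMod N and every m : ZMod N → ℤ and b ∈ K with the property that every w : ZMod N → K with ∑_i w i = a satisfies ∑_i (m i) • w i = b, one has ∑_i (m i) • s (i, R (i + v)) = b — if and only if there is no y : Fin M → K with ∑_{r : Fin M} (n r) • y r = a. -/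
/-- Fiberwise summation over `R`. -/
lemma mermin_key
    {K : Type} [AddCommGroup K]
    (M : ℕ) (n : Fin M → ℕ)
    (N : ℕ) [NeZero N]
    (R : ZMod N → Fin (M + 1))
    (hR0 : (Finset.univ.filter fun i : ZMod N => R i = 0).card = N - ∑ r, n r)
    (hRr : ∀ r : Fin M, (Finset.univ.filter fun i : ZMod N => R i = r.succ).card = n r)
    (f : Fin (M + 1) → K) :
    ∑ i : ZMod N, f (R i) = (N - ∑ r, n r) • f 0 + ∑ r, n r • f r.succ := by
  rw [← Finset.sum_fiberwise Finset.univ R (fun i => f (R i)), Fin.sum_univ_succ]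
  congr 1
  · rw [Finset.sum_congr rfl (fun i hi => by rw [(Finset.mem_filter.1 hi).2]),
      Finset.sum_const, hR0]
  · refine Finset.sum_congr rfl fun r _ => ?_
    rw [Finset.sum_congr rfl (fun i hi => by rw [(Finset.mem_filter.1 hi).2]),
      Finset.sum_const, hRr]

/-- The Mermin empirical model is All-vs-Nothing with respect to `ℤ` and `K`
(i.e. no global assignment satisfies all the `ℤ`-linear equations satisfied by the supports of
all measurement contexts) if and only if the equation `⊕_r n_r • y_r = a` has no solution
in `K`. -/
theorem mermin_AvN_iff_no_solution
    {K : Type} [AddCommGroup K] [Fintype K]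
    (a : K) (M : ℕ) (hM : 1 ≤ M) (n : Fin M → ℕ) (hn : ∀ r, 1 ≤ n r)
    (N : ℕ) [NeZero N] (hN : 1 ≤ N) (hsum : ∑ r, n r ≤ N)
    (hexp : ∀ x : K, N • x = x)
    (R : ZMod N → Fin (M + 1))
    (hR0 : (Finset.univ.filter fun i : ZMod N => R i = 0).card = N - ∑ r, n r)
    (hRr : ∀ r : Fin M, (Finset.univ.filter fun i : ZMod N => R i = r.succ).card = n r) :
    (¬ ∃ s : ZMod N × Fin (M + 1) → K,
      (∀ (m : ZMod N → ℤ) (b : K),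
        (∀ w : ZMod N → K, (∑ i : ZMod N, w i = 0) → ∑ i : ZMod N, m i • w i = b) →
          ∑ i : ZMod N, m i • s (i, 0) = b) ∧
      (∀ (v : ZMod N) (m : ZMod N → ℤ) (b : K),
        (∀ w : ZMod N → K, (∑ i : ZMod N, w i = a) → ∑ i : ZMod N, m i • w i = b) →
          ∑ i : ZMod N, m i • s (i, R (i + v)) = b))
    ↔ ¬ ∃ y : Fin M → K, ∑ r, n r • y r = a := by
  have key := mermin_key (K := K) M n N R hR0 hRr
  constructor
  · intro hs
    rintro ⟨y, hy⟩
    apply hs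
    refine ⟨fun p => Fin.cases 0 y p.2, ?_, ?_⟩
    · intro m b hb
      have h0 := hb (fun _ => 0) (by simp)
      simpa using h0
    · intro v m b hb
      refine hb (fun i => Fin.cases 0 y (R (i + v))) ?_
      have hre : ∑ i : ZMod N, (Fin.cases 0 y (R (i + v)) : K)
          = ∑ j : ZMod N, (Fin.cases 0 y (R j) : K) :=
        Fintype.sum_equiv (Equiv.addRight v) _ _ (fun i => rfl)
      rw [hre, key (fun k => Fin.cases 0 y k)]
      simpa using hy
  · intro hy
    rintro ⟨s, h1, h2⟩
    apply hy
    refine ⟨fun r => ∑ i : ZMod N, s (i, r.succ), ?_⟩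
    have hc : ∑ i : ZMod N, s (i, 0) = 0 := by
      have := h1 (fun _ => 1) 0 (fun w hw => by simpa using hw)
      simpa using this
    have hv : ∀ v : ZMod N, ∑ i : ZMod N, s (i, R (i + v)) = a := by
      intro v
      have := h2 v (fun _ => 1) a (fun w hw => by simpa using hw)
      simpa using this
    have hmain : ∑ i : ZMod N, ((N - ∑ r, n r) • s (i, 0) + ∑ r, n r • s (i, r.succ))
        = N • a := by
      calc ∑ i : ZMod N, ((N - ∑ r, n r) • s (i, 0) + ∑ r, n r • s (i, r.succ))
          = ∑ i : ZMod N, ∑ v : ZMod N, s (i, R (i + v)) := by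
            refine Finset.sum_congr rfl fun i _ => ?_
            have hre : ∑ v : ZMod N, s (i, R (i + v))
                = ∑ j : ZMod N, s (i, R j) :=
              Fintype.sum_equiv (Equiv.addLeft i) _ _ (fun v => rfl)
            rw [hre, key (fun k => s (i, k))]
        _ = ∑ v : ZMod N, ∑ i : ZMod N, s (i, R (i + v)) := Finset.sum_comm
        _ = ∑ _v : ZMod N, a := Finset.sum_congr rfl fun v _ => hv v
        _ = N • a := by simp [ZMod.card]
    rw [Finset.sum_add_distrib, ← Finset.smul_sum, hc, smul_zero, zero_add,
      Finset.sum_comm] at hmain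
    rw [hexp a] at hmain
    rw [← hmain]
    refine Finset.sum_congr rfl fun r _ => ?_
    simp [Finset.smul_sum]
end

section
/- (Quantum realisability, algebraic core.) Let K be a finite abelian group and let (n : Fin S → Fin M → ℤ, a : Fin S → K) be a consistent finite system of ℤ-module equations valued in K. Then, with d := Fintype.card K − 1, there exist an injective additive group homomorphism ι : K →+ (Fin d → AddCircle (2π : ℝ)) into the d-dimensional torus of Z-phases, and phases β : Fin M → (Fin d → AddCircle (2π : ℝ)), such that for every s : Fin S one has ∑_{r : Fin M} (n s r) • β r = ι (a s). In other words, the system acquires a solution in the torus of Z-phases of a Hilbert space of dimension card K, with the X-classical points forming a subgroup isomorphic to K. -/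
open AddSubgroup in
/-- There is an injective additive hom from the rational circle into the real circle of
circumference `2π`. -/
lemma exists_injective_ratCircle_hom :
    ∃ φ : AddCircle (1 : ℚ) →+ AddCircle (2 * Real.pi), Function.Injective φ := by
  have h2π : (2 * Real.pi) ≠ 0 := by positivity
  let e := AddCircle.equivAddCircle (1 : ℝ) (2 * Real.pi) one_ne_zero h2π
  let f : ℚ →+ ℝ := (Rat.castHom ℝ).toAddMonoidHom
  have hsub : zmultiples (1 : ℚ) ≤ (zmultiples (1 : ℝ)).comap f := by
    rintro q ⟨z, hz⟩
    exact ⟨z, by simp [f, ← hz]⟩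
  let φ₀ : AddCircle (1 : ℚ) →+ AddCircle (1 : ℝ) :=
    QuotientAddGroup.map _ _ f hsub
  have hφ₀ : Function.Injective φ₀ := by
    rw [injective_iff_map_eq_zero]
    intro x hx
    induction x using QuotientAddGroup.induction_on with
    | H q =>
      have hq : φ₀ ((q : ℚ) : AddCircle (1 : ℚ)) = (((q : ℝ)) : AddCircle (1 : ℝ)) := rfl
      rw [hq] at hx
      obtain ⟨z, hz⟩ := (AddCircle.coe_eq_zero_iff _).mp hx
      have : (q : ℝ) = (z : ℝ) := by rw [← hz]; simp
      have hq2 : q = (z : ℚ) := by exact_mod_cast this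
      exact (AddCircle.coe_eq_zero_iff _).mpr ⟨z, by simp [hq2]⟩
  exact ⟨(e : AddCircle (1 : ℝ) →+ AddCircle (2 * Real.pi)).comp φ₀,
    e.injective.comp hφ₀⟩

/-- A finite abelian group embeds into the torus of dimension `card K - 1`. -/
lemma exists_injective_torus_hom (K : Type) [AddCommGroup K] [Fintype K] :
    ∃ ι : K →+ (Fin (Fintype.card K - 1) → AddCircle (2 * Real.pi)),
      Function.Injective ι := by
  classical
  obtain ⟨φ, hφ⟩ := exists_injective_ratCircle_hom
  have hcard : Fintype.card {x : K // x ≠ 0} = Fintype.card K - 1 := by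
    simpa using Fintype.card_subtype_compl (fun x : K => x = 0)
  let e : {x : K // x ≠ 0} ≃ Fin (Fintype.card K - 1) :=
    Fintype.equivFinOfCardEq hcard
  have hχ : ∀ i : {x : K // x ≠ 0}, ∃ c : CharacterModule K, c i.1 ≠ 0 := fun i =>
    CharacterModule.exists_character_apply_ne_zero_of_ne_zero i.2
  choose χ hχne using hχ
  refine ⟨{ toFun := fun k j => φ (χ (e.symm j) k)
            map_zero' := by funext j; simp
            map_add' := by intro k k'; funext j; simp }, ?_⟩
  rw [injective_iff_map_eq_zero]
  intro k hk
  by_contra hk0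
  have := congrFun hk (e ⟨k, hk0⟩)
  simp only [Equiv.symm_apply_apply, Pi.zero_apply] at this
  exact hχne ⟨k, hk0⟩ (hφ (by simpa using this))

/-- Quantum realisability, algebraic core: every consistent finite system of
`ℤ`-module equations valued in a finite abelian group `K` acquires a solution in the
`d`-dimensional torus of `Z`-phases (`d = card K - 1`), with the `X`-classical points embedded
as a subgroup isomorphic to `K`. -/
theorem quantum_realisability_algebraic_core
    {K : Type} [AddCommGroup K] [Fintype K]
    (S M : ℕ) (n : Fin S → Fin M → ℤ) (a : Fin S → K)
    (hconsistent : ∀ c : Fin S → ℤ,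
      (∀ r : Fin M, ∑ s, c s * n s r = 0) → ∑ s, c s • a s = 0) :
    ∃ ι : K →+ (Fin (Fintype.card K - 1) → AddCircle (2 * Real.pi)),
      Function.Injective ι ∧
      ∃ β : Fin M → (Fin (Fintype.card K - 1) → AddCircle (2 * Real.pi)),
        ∀ s : Fin S, ∑ r, n s r • β r = ι (a s) := by
  classical
  obtain ⟨ι, hι⟩ := exists_injective_torus_hom K
  refine ⟨ι, hι, ?_⟩
  -- the linear map given by the coefficient matrix
  let N : (Fin S → ℤ) →ₗ[ℤ] (Fin M → ℤ) :=
    { toFun := fun c r => ∑ s, c s * n s r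
      map_add' := by
        intro c c'; funext r
        simp [add_mul, Finset.sum_add_distrib]
      map_smul' := by
        intro z c; funext r
        simp [Finset.mul_sum, mul_assoc] }
  -- the linear map given by the constants
  let F : (Fin S → ℤ) →ₗ[ℤ] K :=
    { toFun := fun c => ∑ s, c s • a s
      map_add' := by
        intro c c'
        simp [add_smul, Finset.sum_add_distrib]
      map_smul' := by
        intro z c
        simp [Finset.smul_sum, mul_smul] }
  have hker : LinearMap.ker N ≤ LinearMap.ker F := by
    intro c hc
    have hc' : ∀ r, ∑ s, c s * n s r = 0 := fun r => congrFun hc r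
    exact hconsistent c hc'
  -- the induced map on the range of `N`
  let H₀ : ↥(LinearMap.range N) →ₗ[ℤ] K :=
    (Submodule.liftQ (LinearMap.ker N) F hker) ∘ₗ (N.quotKerEquivRange).symm.toLinearMap
  have hH₀ : ∀ c : Fin S → ℤ, H₀ ⟨N c, LinearMap.mem_range_self N c⟩ = F c := by
    intro c
    have h1 : (N.quotKerEquivRange).symm ⟨N c, LinearMap.mem_range_self N c⟩ =
        Submodule.Quotient.mk c := by
      rw [LinearEquiv.symm_apply_eq]
      exact Subtype.ext (LinearMap.quotKerEquivRange_apply_mk N c).symm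
    simp only [H₀, LinearMap.comp_apply, LinearEquiv.coe_toLinearMap, h1,
      Submodule.liftQ_apply]
  -- extend `ι ∘ H₀` along the inclusion of the range into `ℤ^M`
  haveI : Fact (0 < 2 * Real.pi) := ⟨by positivity⟩
  obtain ⟨H, hH⟩ := (Module.Baer.of_divisible
      (Fin (Fintype.card K - 1) → AddCircle (2 * Real.pi))).extension_property_addMonoidHom
    ((LinearMap.range N).subtype.toAddMonoidHom)
    (Submodule.injective_subtype _)
    (ι.comp H₀.toAddMonoidHom)
  refine ⟨fun r => H (Pi.single r 1), ?_⟩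
  intro s
  have key : (fun r => n s r) = N (Pi.single s 1) := by
    funext r
    simp [N, Pi.single_apply, Finset.sum_ite_eq']
  have hsum : ∑ r, n s r • H (Pi.single r 1) = H (fun r => n s r) := by
    simp_rw [← map_zsmul H]
    rw [← map_sum]
    congr 1
    funext r'
    simp [Finset.sum_apply, Pi.single_apply, Finset.sum_ite_eq']
  rw [hsum, key]
  have := congrFun (congrArg (fun (h : _ →+ _) => h.toFun) hH)
    ⟨N (Pi.single s 1), LinearMap.mem_range_self N _⟩
  change H (N (Pi.single s 1)) = ι (H₀ ⟨N (Pi.single s 1), LinearMap.mem_range_self N _⟩) at this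
  have h2 : H (N (Pi.single s 1)) = ι (H₀ ⟨N (Pi.single s 1), LinearMap.mem_range_self N _⟩) := by
    exact this
  rw [h2, hH₀]
  congr 1
  simp [F, Pi.single_apply, Finset.sum_ite_eq']
end

section
/- (Gaussian elimination in S¹.) Let (n : Fin S → Fin M → ℤ, a : Fin S → AddCircle (2π : ℝ)) be a finite system of ℤ-module equations valued in the circle group S¹ = ℝ/2πℤ, and assume the system is consistent: for every c : Fin S → ℤ with ∑_s (c s) * (n s r) = 0 for all r : Fin M one has ∑_s (c s) • (a s) = 0 in AddCircle (2π : ℝ). Then the system has a solution in S¹: there exists β : Fin M → AddCircle (2π : ℝ) with ∑_{r : Fin M} (n s r) • β r = a s for every s : Fin S. -/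
/-- Gaussian elimination in `S¹`: every consistent finite system of `ℤ`-module
equations valued in the circle group `ℝ/2πℤ` has a solution in the circle group. -/
theorem gaussian_elimination_in_circle
    (S M : ℕ) (n : Fin S → Fin M → ℤ) (a : Fin S → AddCircle (2 * Real.pi))
    (hconsistent : ∀ c : Fin S → ℤ,
      (∀ r : Fin M, ∑ s, c s * n s r = 0) → ∑ s, c s • a s = 0) :
    ∃ β : Fin M → AddCircle (2 * Real.pi),
      ∀ s : Fin S, ∑ r, n s r • β r = a s := by
  haveI : Fact (0 < 2 * Real.pi) := ⟨by positivity⟩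
  let K := AddCircle (2 * Real.pi)
  -- the linear map sending coefficient vectors to combinations of rows
  let L : (Fin S → ℤ) →ₗ[ℤ] (Fin M → ℤ) :=
    { toFun := fun c r => ∑ s, c s * n s r
      map_add' := fun x y => by
        funext r; simp [add_mul, Finset.sum_add_distrib]
      map_smul' := fun m x => by
        funext r; simp [Finset.mul_sum, mul_assoc] }
  -- the linear map sending coefficient vectors to combinations of constants
  let A : (Fin S → ℤ) →ₗ[ℤ] K :=
    { toFun := fun c => ∑ s, c s • a s
      map_add' := fun x y => by
        simp [add_smul, Finset.sum_add_distrib]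
      map_smul' := fun m x => by
        simp [Finset.smul_sum, mul_smul] }
  have hker : LinearMap.ker L ≤ LinearMap.ker A := by
    intro c hc
    simp only [LinearMap.mem_ker] at hc ⊢
    show ∑ s, c s • a s = 0
    exact hconsistent c fun r => congrFun (show L c = 0 from hc) r
  -- factor A through the range of L
  let g0 : LinearMap.range L →ₗ[ℤ] K :=
    (Submodule.liftQ (LinearMap.ker L) A hker).comp
      (LinearMap.quotKerEquivRange L).symm.toLinearMap
  have hg0 : ∀ c : Fin S → ℤ, g0 ⟨L c, LinearMap.mem_range_self L c⟩ = A c := by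
    intro c
    have : (LinearMap.quotKerEquivRange L).symm ⟨L c, LinearMap.mem_range_self L c⟩ =
        Submodule.Quotient.mk c := by
      apply (LinearMap.quotKerEquivRange L).injective
      simp [LinearMap.quotKerEquivRange_apply_mk]
    simp only [g0, LinearMap.comp_apply, LinearEquiv.coe_toLinearMap, this]
    simp
  -- extend to all of ℤ^M using injectivity (divisibility) of the circle
  have hBaer : Module.Baer ℤ K := Module.Baer.of_divisible K
  obtain ⟨g, hg⟩ := hBaer.extension_property (LinearMap.range L).subtype
    (Submodule.injective_subtype _) g0
  refine ⟨fun r => g (Pi.single r 1), fun s => ?_⟩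
  have key : (fun r => n s r) = L (Pi.single s 1) := by
    funext r
    simp [L, Pi.single_apply]
  calc ∑ r, n s r • g (Pi.single r 1)
      = g (∑ r, n s r • Pi.single r 1) := by
        rw [map_sum]
        exact Finset.sum_congr rfl fun r _ => (map_zsmul g _ _).symm
    _ = g (fun r => n s r) := by
        congr 1
        funext r
        simp [Pi.single_apply, Finset.sum_ite_eq']
    _ = g0 ⟨L (Pi.single s 1), LinearMap.mem_range_self L _⟩ := by
        rw [key]
        have := congrFun (congrArg (fun f => f.toFun) hg)
          ⟨L (Pi.single s 1), LinearMap.mem_range_self L _⟩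
        simpa using this
    _ = A (Pi.single s 1) := hg0 _
    _ = a s := by simp [A, Pi.single_apply]
end

section
/- Let P be a divisible abelian group, i.e. for every nonzero integer k the map x ↦ k • x is surjective on P. Then every consistent finite system of ℤ-module equations valued in P has a solution in P: given n : Fin S → Fin M → ℤ and a : Fin S → P such that for every c : Fin S → ℤ with ∑_s (c s) * (n s r) = 0 for all r : Fin M one has ∑_s (c s) • (a s) = 0, there exists β : Fin M → P with ∑_{r : Fin M} (n s r) • β r = a s for every s : Fin S. -/
/-- every consistent finite system of `ℤ`-module equations valued in a divisible
abelian group `P` has a solution in `P`. -/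
theorem divisible_group_consistent_system_has_solution
    {P : Type} [AddCommGroup P]
    (hdiv : ∀ k : ℤ, k ≠ 0 → Function.Surjective (fun x : P => k • x))
    (S M : ℕ) (n : Fin S → Fin M → ℤ) (a : Fin S → P)
    (hconsistent : ∀ c : Fin S → ℤ,
      (∀ r : Fin M, ∑ s, c s * n s r = 0) → ∑ s, c s • a s = 0) :
    ∃ β : Fin M → P, ∀ s : Fin S, ∑ r, n s r • β r = a s := by
  classical
  -- P is divisible, hence an injective ℤ-module
  letI : DivisibleBy P ℤ :=
    { div := fun x k => if h : k = 0 then 0 else (hdiv k h x).choose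
      div_zero := fun a => dif_pos rfl
      div_cancel := fun {k} x hk => by
        simp only [dif_neg hk]
        exact (hdiv k hk x).choose_spec }
  haveI : Module.Injective ℤ P := (Module.Baer.of_divisible P).injective
  -- linear maps
  let φ : (Fin S → ℤ) →ₗ[ℤ] (Fin M → ℤ) :=
    { toFun := fun c r => ∑ s, c s * n s r
      map_add' := by
        intro c d; funext r; simp [add_mul, Finset.sum_add_distrib]
      map_smul' := by
        intro m c; funext r; simp [Finset.mul_sum, mul_assoc] }
  let g : (Fin S → ℤ) →ₗ[ℤ] P :=
    { toFun := fun c => ∑ s, c s • a s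
      map_add' := by
        intro c d; simp [add_smul, Finset.sum_add_distrib]
      map_smul' := by
        intro m c; simp [Finset.smul_sum, mul_smul] }
  have hker : LinearMap.ker φ ≤ LinearMap.ker g := by
    intro c hc
    have : ∀ r : Fin M, ∑ s, c s * n s r = 0 := fun r => congrFun hc r
    exact hconsistent c this
  -- factor g through the range of φ
  let ψ : LinearMap.range φ →ₗ[ℤ] P :=
    (Submodule.liftQ _ g hker).comp (LinearMap.quotKerEquivRange φ).symm.toLinearMap
  have hψ : ∀ c : Fin S → ℤ, ψ ⟨φ c, LinearMap.mem_range_self φ c⟩ = g c := by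
    intro c
    have h1 : (LinearMap.quotKerEquivRange φ).symm ⟨φ c, LinearMap.mem_range_self φ c⟩
        = Submodule.Quotient.mk c := by
      rw [LinearEquiv.symm_apply_eq]
      exact Subtype.ext (LinearMap.quotKerEquivRange_apply_mk φ (x := c)).symm
    simp only [ψ, LinearMap.comp_apply, LinearEquiv.coe_toLinearMap, h1]
    exact Submodule.liftQ_apply _ g c
  -- extend ψ along the inclusion of the range into the whole space
  obtain ⟨Ψ, hΨ⟩ := Module.Injective.out (LinearMap.range φ).subtype
    (Submodule.injective_subtype _) ψ
  refine ⟨fun r => Ψ (Pi.single r 1), fun s => ?_⟩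
  have key : ∑ r, n s r • Ψ (Pi.single r 1) = Ψ (n s) := by
    simp_rw [← map_smul Ψ]
    rw [← map_sum]
    congr 1
    funext r'
    simp [Pi.single_apply, Finset.sum_ite_eq']
  rw [key]
  have : n s = φ (Pi.single s 1) := by
    funext r
    simp [φ, Pi.single_apply]
  rw [this]
  have := hΨ ⟨φ (Pi.single s 1), LinearMap.mem_range_self φ _⟩
  simp only [Submodule.coe_subtype] at this
  rw [this, hψ]
  simp [g, Pi.single_apply]
end

section
/- (Mermin's parity lemma for three qubits.) Let α : Fin 3 → ℝ and c ∈ ZMod 2 with Complex.exp (Complex.I * ∑_j α j) = (−1 : ℂ)^(c.val). Define ψ : (Fin 3 → ZMod 2) → ℂ by ψ x = (Real.sqrt 2)⁻¹ if x is the constant-0 function, ψ x = Complex.exp (Complex.I * ∑_j α j) * (Real.sqrt 2)⁻¹ if x is the constant-1 function, and ψ x = 0 otherwise; and for b : Fin 3 → ZMod 2 define φ_b x = (Real.sqrt 8)⁻¹ * ∏_{j : Fin 3} (−1 : ℂ)^((b j * x j).val). If ∑_j b j ≠ c in ZMod 2, then ∑_{x : Fin 3 → ZMod 2} (φ_b x)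 * (ψ x) = 0. (Hence if α₁ ⊕ α₂ ⊕ α₃ = 0 or π mod 2π, the ℤ/2-sum of the X-measurement outcomes on the phase-gated 3-qubit GHZ state is deterministically 0 or 1 respectively.) -/
/-- The 3-qubit GHZ state with local phase gates `P_{α j} = diag(1, e^{i α j})` applied:
amplitude `2^{-1/2}` on the all-0 basis vector, `2^{-1/2} e^{i ∑ α j}` on the all-1 basis
vector, and `0` elsewhere. -/
noncomputable def ghz3Phased (α : Fin 3 → ℝ) (x : Fin 3 → ZMod 2) : ℂ :=
  if x = (fun _ => 0) then ((Real.sqrt 2)⁻¹ : ℝ)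
  else if x = (fun _ => 1) then
    Complex.exp (Complex.I * ((∑ j, α j : ℝ) : ℂ)) * ((Real.sqrt 2)⁻¹ : ℝ)
  else 0

/-- The joint eigenvector of the three single-qubit Pauli `X` observables with outcome
`b : Fin 3 → ZMod 2`, with amplitudes `8^{-1/2} ∏ j (-1)^{b j · x j}`. -/
noncomputable def pauliX3JointEigvec (b : Fin 3 → ZMod 2) (x : Fin 3 → ZMod 2) : ℂ :=
  ((Real.sqrt 8)⁻¹ : ℝ) * ∏ j : Fin 3, (-1 : ℂ) ^ ((b j * x j).val)

lemma zmod2_val0 : ((0 : ZMod 2)).val = 0 := rfl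
lemma zmod2_val1 : ((1 : ZMod 2)).val = 1 := rfl
lemma zmod2_val2 : ((2 : ZMod 2)).val = 0 := rfl

lemma neg_one_pow_zmod_add (x y : ZMod 2) :
    (-1 : ℂ) ^ ((x + y).val) = (-1 : ℂ) ^ x.val * (-1 : ℂ) ^ y.val := by
  rcases (show ∀ z : ZMod 2, z = 0 ∨ z = 1 by decide) x with rfl | rfl <;>
    rcases (show ∀ z : ZMod 2, z = 0 ∨ z = 1 by decide) y with rfl | rfl <;>
    norm_num [zmod2_val0, zmod2_val1, zmod2_val2]

/-- Mermin's parity lemma for three qubits: if `e^{i ∑ α j} = (-1)^c` and the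
`ℤ/2`-sum of the outcomes `b j` differs from `c`, then the joint outcome `b` has amplitude
zero on the phase-gated 3-qubit GHZ state. -/
theorem mermin_parity_lemma (α : Fin 3 → ℝ) (c : ZMod 2)
    (hα : Complex.exp (Complex.I * ((∑ j, α j : ℝ) : ℂ)) = (-1 : ℂ) ^ c.val)
    (b : Fin 3 → ZMod 2) (hb : ∑ j, b j ≠ c) :
    ∑ x : Fin 3 → ZMod 2, pauliX3JointEigvec b x * ghz3Phased α x = 0 := by
  classical
  have hne : ((fun _ => 0 : Fin 3 → ZMod 2)) ≠ (fun _ => 1) := fun h =>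
    absurd (congrFun h 0) (by decide)
  have hsplit : ∀ x : Fin 3 → ZMod 2,
      pauliX3JointEigvec b x * ghz3Phased α x =
        (if x = (fun _ => 0) then pauliX3JointEigvec b (fun _ => 0) *
            (((Real.sqrt 2)⁻¹ : ℝ) : ℂ) else 0) +
        (if x = (fun _ => 1) then pauliX3JointEigvec b (fun _ => 1) *
            (Complex.exp (Complex.I * ((∑ j, α j : ℝ) : ℂ)) * ((Real.sqrt 2)⁻¹ : ℝ)) else 0) := by
    intro x
    unfold ghz3Phased
    by_cases h0 : x = fun _ => 0
    · subst h0; simp [hne]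
    · by_cases h1 : x = fun _ => 1
      · subst h1; simp [Ne.symm hne]
      · simp [h0, h1]
  rw [Finset.sum_congr rfl (fun x _ => hsplit x), Finset.sum_add_distrib,
    Finset.sum_ite_eq' _ _ _, Finset.sum_ite_eq' _ _ _]
  simp only [Finset.mem_univ, if_true]
  have hφ0 : pauliX3JointEigvec b (fun _ => 0) = ((Real.sqrt 8)⁻¹ : ℝ) := by
    unfold pauliX3JointEigvec; simp
  have hφ1 : pauliX3JointEigvec b (fun _ => 1) =
      ((Real.sqrt 8)⁻¹ : ℝ) * (-1 : ℂ) ^ ((∑ j, b j).val) := by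
    unfold pauliX3JointEigvec
    congr 1
    rw [Fin.prod_univ_three, Fin.sum_univ_three, neg_one_pow_zmod_add,
      neg_one_pow_zmod_add]
    simp
  have haux : ∀ s t : ZMod 2, s ≠ t → s = t + 1 := by decide
  have hbc : (∑ j, b j) = c + 1 := haux _ _ hb
  rw [hφ0, hφ1, hα, hbc]
  rcases (show ∀ z : ZMod 2, z = 0 ∨ z = 1 by decide) c with rfl | rfl <;>
    norm_num [zmod2_val0, zmod2_val1, zmod2_val2]
end
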